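/- Let ν ≥ 2, let Ψ be a set of coverings with #Ψ ≥ 2, and let α : Ψ → ℝ satisfy α(ψ) > 0 for every ψ ∈ Ψ. If the weighted RVB polynomial F_α = Σ_{ψ∈Ψ} α(ψ)·F_ψ (a polynomial in ℂ[X_1,…,X_{2ν}] with real coefficients) splits across a nontrivial bipartition (E,E') of Γ_{2ν}, then Ψ is decomposable via E, i.e., ψ(E∩A) = E∩B for every ψ ∈ Ψ. -/

import Mathlib

open MvPolynomial Finset

noncomputable section

/-- The odd-labelled site `2t−1` of the paper (`t`-th site of sublattice `A`),
zero-indexed as `2t` in `Fin (2ν)`. -/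
def siteA (ν : ℕ) (t : Fin ν) : Fin (2 * ν) := ⟨2 * t.val, by have := t.isLt; omega⟩

/-- The even-labelled site `2t` of the paper (`t`-th site of sublattice `B`),
zero-indexed as `2t+1` in `Fin (2ν)`. -/
def siteB (ν : ℕ) (t : Fin ν) : Fin (2 * ν) := ⟨2 * t.val + 1, by have := t.isLt; omega⟩

/-- A covering is a bijection `ψ : A → B`; it is encoded by the permutation
`σ` of `Fin ν` with `ψ(siteA t) = siteB (σ t)`.  Its covering polynomial is
`F_ψ = ∏_{a∈A} (X_{ψ(a)} − X_a)`. -/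
def covPoly (ν : ℕ) (σ : Equiv.Perm (Fin ν)) : MvPolynomial (Fin (2 * ν)) ℂ :=
  ∏ t : Fin ν, (X (siteB ν (σ t)) - X (siteA ν t))

/-- `F` splits across the bipartition `(E, Eᶜ)`. -/
def SplitsAcross {n : ℕ} (F : MvPolynomial (Fin n) ℂ) (E : Finset (Fin n)) : Prop :=
  ∃ p q : MvPolynomial (Fin n) ℂ, F = p * q ∧ p.vars ⊆ E ∧ q.vars ⊆ Eᶜ

/-- `ψ(E ∩ A) = E ∩ B` for the covering `ψ` encoded by `σ`
(here `E ∩ B` is the set of odd-indexed, i.e. `B`-sublattice, elements of `E`). -/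
def MapsCut (ν : ℕ) (σ : Equiv.Perm (Fin ν)) (E : Finset (Fin (2 * ν))) : Prop :=
  ((Finset.univ.filter (fun t => siteA ν t ∈ E)).image fun t => siteB ν (σ t))
    = E.filter (fun x => x.val % 2 = 1)


/-- The weighted RVB polynomial `F_α = Σ_{ψ∈Ψ} α(ψ)·F_ψ` (real weights, viewed in
`ℂ[X_1,…,X_{2ν}]`). -/
def weightedRvbPoly (ν : ℕ) (Ψ : Finset (Equiv.Perm (Fin ν)))
    (α : Equiv.Perm (Fin ν) → ℝ) : MvPolynomial (Fin (2 * ν)) ℂ :=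
  ∑ σ ∈ Ψ, C ((α σ : ℂ)) * covPoly ν σ


section Aux
variable {ν : ℕ}


lemma siteA_inj : Function.Injective (siteA ν) := by
  intro a b h
  simp only [siteA, Fin.mk.injEq] at h
  exact Fin.ext (by omega)

lemma siteB_inj : Function.Injective (siteB ν) := by
  intro a b h
  simp only [siteB, Fin.mk.injEq] at h
  exact Fin.ext (by omega)

lemma siteA_ne_siteB (t s : Fin ν) : siteA ν t ≠ siteB ν s := by
  simp only [siteA, siteB, ne_eq, Fin.mk.injEq]
  omega

lemma sumsingle_apply {ι τ : Type*} [DecidableEq ι] [DecidableEq τ] (S : Finset ι) (f : ι → τ)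
    (hf : Function.Injective f) (i : ι) :
    (∑ j ∈ S, Finsupp.single (f j) 1 : τ →₀ ℕ) (f i) = if i ∈ S then 1 else 0 := by
  rw [Finset.sum_apply']
  rw [Finset.sum_congr rfl (fun j _ => ?_), Finset.sum_ite_eq' S i (fun _ => 1)]
  rw [Finsupp.single_apply]
  simp [hf.eq_iff, eq_comm]

lemma sumsingle_apply_zero {ι τ : Type*} [DecidableEq τ] (S : Finset ι) (f : ι → τ)
    (x : τ) (h : ∀ j ∈ S, f j ≠ x) :
    (∑ j ∈ S, Finsupp.single (f j) 1 : τ →₀ ℕ) x = 0 := by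
  rw [Finset.sum_apply']
  exact Finset.sum_eq_zero fun j hj => by rw [Finsupp.single_apply, if_neg (h j hj)]

lemma prod_X_eq {ι τ : Type*} (S : Finset ι) (f : ι → τ) :
    (∏ i ∈ S, (X (f i) : MvPolynomial τ ℂ)) =
      monomial (∑ i ∈ S, Finsupp.single (f i) 1) 1 := by
  induction S using Finset.cons_induction with
  | empty => simp
  | cons a s ha ih =>
    rw [Finset.prod_cons, Finset.sum_cons, ih, X, monomial_mul, one_mul]

/-- exponent of the monomial in which we pick `X_{Bσt}` for `t ∈ T` and `-X_{At}` else -/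
def expT (ν : ℕ) (σ : Equiv.Perm (Fin ν)) (T : Finset (Fin ν)) : Fin (2 * ν) →₀ ℕ :=
  (∑ t ∈ T, Finsupp.single (siteB ν (σ t)) 1) + ∑ t ∈ Tᶜ, Finsupp.single (siteA ν t) 1

lemma covPoly_eq (σ : Equiv.Perm (Fin ν)) :
    covPoly ν σ = ∑ T ∈ (univ : Finset (Fin ν)).powerset,
      monomial (expT ν σ T) ((-1 : ℂ) ^ Tᶜ.card) := by
  unfold covPoly
  simp_rw [sub_eq_add_neg]
  rw [Finset.prod_add]
  refine Finset.sum_congr rfl fun T hT => ?_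
  have h1 : (∏ t ∈ univ \ T, (-X (siteA ν t) : MvPolynomial (Fin (2*ν)) ℂ))
      = C ((-1 : ℂ)^((univ \ T).card)) * ∏ t ∈ univ \ T, X (siteA ν t) := by
    rw [map_pow, map_neg, map_one, ← Finset.prod_const, ← Finset.prod_mul_distrib]
    exact Finset.prod_congr rfl fun t _ => by rw [neg_one_mul]
  rw [h1, prod_X_eq, prod_X_eq, ← Finset.compl_eq_univ_sdiff, mul_left_comm,
    monomial_mul, one_mul, C_mul_monomial, mul_one, expT]

/-- the all-`A` exponent -/
def dA (ν : ℕ) : Fin (2 * ν) →₀ ℕ := ∑ t : Fin ν, Finsupp.single (siteA ν t) 1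

/-- the exponent with all `A`-sites except `t`, plus `B (σ t)` -/
def dAt (ν : ℕ) (σ : Equiv.Perm (Fin ν)) (t : Fin ν) : Fin (2 * ν) →₀ ℕ :=
  Finsupp.single (siteB ν (σ t)) 1 + ∑ s ∈ (univ : Finset (Fin ν)).erase t, Finsupp.single (siteA ν s) 1

lemma expT_apply_A (σ : Equiv.Perm (Fin ν)) (T : Finset (Fin ν)) (u : Fin ν) :
    expT ν σ T (siteA ν u) = if u ∈ Tᶜ then 1 else 0 := by
  rw [expT, Finsupp.add_apply, sumsingle_apply_zero _ _ _ (fun j _ => (siteA_ne_siteB u (σ j)).symm),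
    sumsingle_apply _ _ siteA_inj, zero_add]

lemma expT_apply_B (σ : Equiv.Perm (Fin ν)) (T : Finset (Fin ν)) (s : Fin ν) :
    expT ν σ T (siteB ν s) = if σ.symm s ∈ T then 1 else 0 := by
  rw [expT, Finsupp.add_apply, sumsingle_apply_zero _ _ _ (fun j _ => siteA_ne_siteB j s), add_zero]
  have hinj : Function.Injective (fun j => siteB ν (σ j)) := fun a b h => σ.injective (siteB_inj h)
  have h2 := sumsingle_apply T (fun j => siteB ν (σ j)) hinj (σ.symm s)
  simp only [Equiv.apply_symm_apply] at h2
  exact h2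

lemma expT_eq_dA_iff (σ : Equiv.Perm (Fin ν)) (T : Finset (Fin ν)) :
    expT ν σ T = dA ν ↔ T = ∅ := by
  constructor
  · intro h
    rw [Finset.eq_empty_iff_forall_notMem]
    intro t ht
    have := DFunLike.congr_fun h (siteB ν (σ t))
    simp only [expT_apply_B] at this
    rw [Equiv.symm_apply_apply, if_pos ht] at this
    rw [dA, sumsingle_apply_zero _ _ _ (fun j _ => siteA_ne_siteB j (σ t))] at this
    exact one_ne_zero this
  · rintro rfl
    rw [expT, dA, Finset.sum_empty, zero_add, Finset.compl_empty]

lemma expT_eq_dAt_iff (σ' σ : Equiv.Perm (Fin ν)) (t : Fin ν) (T : Finset (Fin ν)) :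
    expT ν σ' T = dAt ν σ t ↔ (T = {t} ∧ σ' t = σ t) := by
  have key : ∀ u, dAt ν σ t (siteA ν u) = if u ∈ (univ : Finset (Fin ν)).erase t then 1 else 0 := by
    intro u
    rw [dAt, Finsupp.add_apply, Finsupp.single_apply,
      if_neg (siteA_ne_siteB u (σ t)).symm, sumsingle_apply _ _ siteA_inj, zero_add]
  constructor
  · intro h
    have hT : T = {t} := by
      ext u
      have := DFunLike.congr_fun h (siteA ν u)
      simp only [expT_apply_A, key] at this
      simp only [Finset.mem_singleton]
      constructor
      · intro hu
        by_contra hut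
        rw [if_neg (by simpa using hu), if_pos (Finset.mem_erase.2 ⟨hut, Finset.mem_univ u⟩)] at this
        exact one_ne_zero this.symm
      · rintro rfl
        by_contra hu
        rw [if_pos (Finset.mem_compl.2 hu), if_neg (fun hc => (Finset.mem_erase.1 hc).1 rfl)] at this
        exact one_ne_zero this
    refine ⟨hT, ?_⟩
    have := DFunLike.congr_fun h (siteB ν (σ' t))
    rw [expT_apply_B, Equiv.symm_apply_apply, hT, if_pos (Finset.mem_singleton_self t)] at this
    rw [dAt, Finsupp.add_apply, Finsupp.single_apply,
      sumsingle_apply_zero _ _ _ (fun j _ => siteA_ne_siteB j (σ' t)), add_zero] at this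
    by_cases hc : siteB ν (σ t) = siteB ν (σ' t)
    · exact (siteB_inj hc).symm
    · rw [if_neg hc] at this; exact absurd this one_ne_zero
  · rintro ⟨rfl, hσ⟩
    rw [expT, dAt, Finset.sum_singleton, hσ]
    congr 1
    apply Finset.sum_congr _ (fun _ _ => rfl)
    rw [Finset.compl_eq_univ_sdiff, Finset.sdiff_singleton_eq_erase]

lemma coeff_covPoly_dA (σ : Equiv.Perm (Fin ν)) :
    coeff (dA ν) (covPoly ν σ) = (-1 : ℂ) ^ ν := by
  rw [covPoly_eq, coeff_sum]
  simp_rw [coeff_monomial]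
  rw [Finset.sum_eq_single ∅]
  · rw [if_pos ((expT_eq_dA_iff σ ∅).2 rfl), Finset.compl_empty, Finset.card_univ, Fintype.card_fin]
  · intro T _ hT
    rw [if_neg (fun h => hT ((expT_eq_dA_iff σ T).1 h))]
  · intro h; exact absurd (Finset.empty_mem_powerset _) h

lemma coeff_covPoly_dAt (σ' σ : Equiv.Perm (Fin ν)) (t : Fin ν) :
    coeff (dAt ν σ t) (covPoly ν σ') = if σ' t = σ t then (-1 : ℂ) ^ (ν - 1) else 0 := by
  rw [covPoly_eq, coeff_sum]
  simp_rw [coeff_monomial]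
  rw [Finset.sum_eq_single {t}]
  · by_cases hσ : σ' t = σ t
    · rw [if_pos ((expT_eq_dAt_iff σ' σ t {t}).2 ⟨rfl, hσ⟩), if_pos hσ]
      congr 1
      rw [Finset.card_compl, Finset.card_singleton, Fintype.card_fin]
    · rw [if_neg hσ, if_neg (fun h => hσ ((expT_eq_dAt_iff σ' σ t {t}).1 h).2)]
  · intro T _ hT
    rw [if_neg (fun h => hT ((expT_eq_dAt_iff σ' σ t T).1 h).1)]
  · intro h; exact absurd (Finset.mem_powerset.2 (Finset.subset_univ _)) h

lemma coeff_mul_split {n : ℕ} (p q : MvPolynomial (Fin n) ℂ) (E : Finset (Fin n))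
    (hp : p.vars ⊆ E) (hq : q.vars ⊆ Eᶜ) (d e : Fin n →₀ ℕ)
    (hd : ∀ i, i ∉ E → d i = 0) (he : ∀ i, i ∈ E → e i = 0) :
    coeff (d + e) (p * q) = coeff d p * coeff e q := by
  rw [coeff_mul]
  apply Finset.sum_eq_single_of_mem (d, e) (Finset.HasAntidiagonal.mem_antidiagonal.2 rfl)
  rintro ⟨a, b⟩ hab hne
  rw [Finset.HasAntidiagonal.mem_antidiagonal] at hab
  by_contra hc
  have hpa : coeff a p ≠ 0 := fun h => hc (by simp [h])
  have hqb : coeff b q ≠ 0 := fun h => hc (by simp [h])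
  have ha : ∀ i, i ∉ E → a i = 0 := by
    intro i hi
    by_contra h0
    exact hi (hp ((mem_vars i).2 ⟨a, mem_support_iff.2 hpa, Finsupp.mem_support_iff.2 h0⟩))
  have hb : ∀ i, i ∈ E → b i = 0 := by
    intro i hi
    by_contra h0
    have := hq ((mem_vars i).2 ⟨b, mem_support_iff.2 hqb, Finsupp.mem_support_iff.2 h0⟩)
    exact (Finset.mem_compl.1 this) hi
  apply hne
  have hab' : ∀ i, a i + b i = d i + e i := fun i => DFunLike.congr_fun hab i
  have had : a = d := by
    ext i
    by_cases hi : i ∈ E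
    · have := hab' i; rw [hb i hi, he i hi] at this; omega
    · rw [ha i hi, hd i hi]
  have hbe : b = e := by
    ext i
    by_cases hi : i ∈ E
    · rw [hb i hi, he i hi]
    · have := hab' i; rw [ha i hi, hd i hi] at this; omega
  rw [had, hbe]

lemma covPoly_homog (σ : Equiv.Perm (Fin ν)) : (covPoly ν σ).IsHomogeneous ν := by
  have := MvPolynomial.IsHomogeneous.prod (univ : Finset (Fin ν))
    (fun t => X (siteB ν (σ t)) - X (siteA ν t)) (fun _ => 1)
    (fun t _ => (isHomogeneous_X ℂ _).sub (isHomogeneous_X ℂ _))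
  simp at this; exact this

lemma my_degree_single {τ : Type*} (i : τ) (k : ℕ) : (Finsupp.single i k).degree = k := by
  rw [Finsupp.degree_eq_weight_one, Finsupp.weight_apply, Finsupp.sum_single_index] <;> simp

lemma my_degree_add {τ : Type*} (f g : τ →₀ ℕ) : (f + g).degree = f.degree + g.degree := by
  rw [Finsupp.degree_eq_weight_one, map_add]

lemma my_degree_sum {ι τ : Type*} (S : Finset ι) (f : ι → (τ →₀ ℕ)) :
    (∑ i ∈ S, f i).degree = ∑ i ∈ S, (f i).degree := by
  rw [Finsupp.degree_eq_weight_one, map_sum]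

end Aux

/-- Theorem 4.1(iii)(a): for strictly positive weights `α`, if
the weighted RVB polynomial `F_α` splits across a nontrivial bipartition `(E,E')`,
then `Ψ` is decomposable via `E`, i.e. `ψ(E∩A) = E∩B` for every `ψ ∈ Ψ`. -/
theorem stmt_18 (ν : ℕ) (hν : 2 ≤ ν) (Ψ : Finset (Equiv.Perm (Fin ν)))
    (hΨ : 2 ≤ Ψ.card) (α : Equiv.Perm (Fin ν) → ℝ)
    (hα : ∀ σ ∈ Ψ, 0 < α σ)
    (E : Finset (Fin (2 * ν))) (hE : E.Nonempty) (hE' : E ≠ Finset.univ)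
    (hsplit : SplitsAcross (weightedRvbPoly ν Ψ α) E) :
    ∀ σ ∈ Ψ, MapsCut ν σ E := by
  obtain ⟨p, q, hpq, hp, hq⟩ := hsplit
  intro σ hσΨ
  have hΨne : Ψ.Nonempty := Finset.card_pos.1 (lt_of_lt_of_le two_pos hΨ)
  set F := weightedRvbPoly ν Ψ α with hF
  -- homogeneity of F
  have hhom : F.IsHomogeneous ν :=
    IsHomogeneous.sum _ _ _ (fun σ' _ => (covPoly_homog σ').C_mul _)
  -- coefficient of the all-A monomial is nonzero
  have hcdA : coeff (dA ν) F ≠ 0 := by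
    rw [hF, weightedRvbPoly, coeff_sum]
    simp_rw [coeff_C_mul, coeff_covPoly_dA, ← Finset.sum_mul]
    refine mul_ne_zero ?_ (pow_ne_zero _ (by norm_num))
    rw [← Complex.ofReal_sum]
    exact Complex.ofReal_ne_zero.2 (Finset.sum_pos hα hΨne).ne'
  -- the pointwise statement
  have hiff : ∀ t : Fin ν, (siteA ν t ∈ E ↔ siteB ν (σ t) ∈ E) := by
    intro t
    set b := siteB ν (σ t) with hb
    -- coefficient of the dAt monomial is nonzero
    have hcdAt : coeff (dAt ν σ t) F ≠ 0 := by
      rw [hF, weightedRvbPoly, coeff_sum]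
      simp_rw [coeff_C_mul, coeff_covPoly_dAt]
      have : ∀ σ' ∈ Ψ, (α σ' : ℂ) * (if σ' t = σ t then (-1 : ℂ) ^ (ν - 1) else 0)
          = (-1 : ℂ) ^ (ν - 1) * ((if σ' t = σ t then α σ' else 0 : ℝ) : ℂ) := by
        intro σ' _; by_cases h : σ' t = σ t <;> simp [h] <;> ring
      rw [Finset.sum_congr rfl this, ← Finset.mul_sum, ← Complex.ofReal_sum]
      refine mul_ne_zero (pow_ne_zero _ (by norm_num)) (Complex.ofReal_ne_zero.2 ?_)
      refine (Finset.sum_pos' (fun σ' _ => ?_) ⟨σ, hσΨ, ?_⟩).ne'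
      · split
        · exact (hα σ' ‹σ' ∈ Ψ›).le
        · exact le_refl 0
      · rw [if_pos rfl]; exact hα σ hσΨ
    -- split dA
    set d1 : Fin (2 * ν) →₀ ℕ :=
      ∑ u ∈ univ.filter (fun u => siteA ν u ∈ E), Finsupp.single (siteA ν u) 1 with hd1
    set d2 : Fin (2 * ν) →₀ ℕ :=
      ∑ u ∈ univ.filter (fun u => ¬ siteA ν u ∈ E), Finsupp.single (siteA ν u) 1 with hd2
    have hdAsplit : dA ν = d1 + d2 := by
      rw [hd1, hd2, dA, Finset.sum_filter_add_sum_filter_not]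
    have hd1supp : ∀ i, i ∉ E → d1 i = 0 := by
      intro i hi
      apply sumsingle_apply_zero
      intro j hj h
      rw [Finset.mem_filter] at hj
      exact hi (h ▸ hj.2)
    have hd2supp : ∀ i, i ∈ E → d2 i = 0 := by
      intro i hi
      apply sumsingle_apply_zero
      intro j hj h
      rw [Finset.mem_filter] at hj
      exact hj.2 (h ▸ hi)
    -- split dAt
    set e1 : Fin (2 * ν) →₀ ℕ :=
      (if b ∈ E then Finsupp.single b 1 else 0) +
        ∑ u ∈ (univ.erase t).filter (fun u => siteA ν u ∈ E), Finsupp.single (siteA ν u) 1 with he1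
    set e2 : Fin (2 * ν) →₀ ℕ :=
      (if b ∈ E then 0 else Finsupp.single b 1) +
        ∑ u ∈ (univ.erase t).filter (fun u => ¬ siteA ν u ∈ E), Finsupp.single (siteA ν u) 1 with he2
    have hdAtsplit : dAt ν σ t = e1 + e2 := by
      rw [he1, he2, dAt, ← Finset.sum_filter_add_sum_filter_not (univ.erase t)
        (fun u => siteA ν u ∈ E) (fun u => Finsupp.single (siteA ν u) 1)]
      by_cases hbE : b ∈ E <;> simp only [hbE, if_true, if_false] <;> abel
    have he1supp : ∀ i, i ∉ E → e1 i = 0 := by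
      intro i hi
      have hz : (∑ u ∈ (univ.erase t).filter (fun u => siteA ν u ∈ E),
          Finsupp.single (siteA ν u) 1 : Fin (2*ν) →₀ ℕ) i = 0 := by
        refine sumsingle_apply_zero _ (fun u => siteA ν u) i ?_
        intro j hj h
        rw [Finset.mem_filter] at hj
        apply hi
        rw [← h]
        exact hj.2
      rw [he1, Finsupp.add_apply, hz, add_zero]
      split
      · rename_i hbE
        rw [Finsupp.single_apply, if_neg]
        intro h
        exact hi (h ▸ hbE)
      · rfl
    have he2supp : ∀ i, i ∈ E → e2 i = 0 := by
      intro i hi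
      have hz : (∑ u ∈ (univ.erase t).filter (fun u => ¬ siteA ν u ∈ E),
          Finsupp.single (siteA ν u) 1 : Fin (2*ν) →₀ ℕ) i = 0 := by
        refine sumsingle_apply_zero _ (fun u => siteA ν u) i ?_
        intro j hj h
        rw [Finset.mem_filter] at hj
        apply hj.2
        rw [show siteA ν j = i from h]
        exact hi
      rw [he2, Finsupp.add_apply, hz, add_zero]
      split
      · rfl
      · rename_i hbE
        rw [Finsupp.single_apply, if_neg]
        intro h
        exact hbE (h ▸ hi)
    -- extract nonvanishing of split coefficients
    rw [hdAsplit, hpq, coeff_mul_split p q E hp hq d1 d2 hd1supp hd2supp] at hcdA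
    rw [hdAtsplit, hpq, coeff_mul_split p q E hp hq e1 e2 he1supp he2supp] at hcdAt
    -- the mixed coefficient is nonzero
    have hmix : coeff (d1 + e2) F ≠ 0 := by
      rw [hpq, coeff_mul_split p q E hp hq d1 e2 hd1supp he2supp]
      exact mul_ne_zero (fun h => hcdA (by rw [h, zero_mul])) (fun h => hcdAt (by rw [h, mul_zero]))
    -- hence degree of d1 + e2 is ν
    have hdeg : (d1 + e2).degree = ν := by
      by_contra h
      exact hmix (hhom.coeff_eq_zero h)
    -- compute degrees
    have hdegd1 : d1.degree = (univ.filter (fun u => siteA ν u ∈ E)).card := by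
      rw [hd1, my_degree_sum]
      simp [my_degree_single]
    have hdege2 : e2.degree = (if b ∈ E then 0 else 1) +
        ((univ.erase t).filter (fun u => ¬ siteA ν u ∈ E)).card := by
      rw [he2, my_degree_add, my_degree_sum]
      simp only [my_degree_single]
      congr 1
      · split <;> simp [my_degree_single]
      · simp
    have hcards : (univ.filter (fun u => siteA ν u ∈ E)).card +
        (univ.filter (fun u => ¬ siteA ν u ∈ E)).card = ν := by
      rw [Finset.card_filter_add_card_filter_not, Finset.card_univ, Fintype.card_fin]
    have herase : (univ.erase t).filter (fun u => ¬ siteA ν u ∈ E)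
        = (univ.filter (fun u => ¬ siteA ν u ∈ E)).erase t := Finset.filter_erase _ _ _
    rw [my_degree_add, hdegd1, hdege2, herase] at hdeg
    by_cases hAt : siteA ν t ∈ E
    · have ht : t ∉ univ.filter (fun u => ¬ siteA ν u ∈ E) := by simp [hAt]
      rw [Finset.erase_eq_of_notMem ht] at hdeg
      by_cases hbE : b ∈ E
      · exact iff_of_true hAt hbE
      · rw [if_neg hbE] at hdeg; omega
    · have ht : t ∈ univ.filter (fun u => ¬ siteA ν u ∈ E) := by simp [hAt]
      rw [Finset.card_erase_of_mem ht] at hdeg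
      have hpos : 1 ≤ (univ.filter (fun u => ¬ siteA ν u ∈ E)).card :=
        Finset.card_pos.2 ⟨t, ht⟩
      by_cases hbE : b ∈ E
      · rw [if_pos hbE] at hdeg; omega
      · exact iff_of_false hAt hbE
  -- conclude MapsCut
  unfold MapsCut
  ext x
  simp only [Finset.mem_image, Finset.mem_filter, Finset.mem_univ, true_and]
  constructor
  · rintro ⟨u, hu, rfl⟩
    refine ⟨(hiff u).1 hu, ?_⟩
    simp only [siteB]
    omega
  · rintro ⟨hxE, hodd⟩
    have hx2 : (x : ℕ) / 2 < ν := by have := x.isLt; omega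
    have hsx : siteB ν ⟨x.val / 2, hx2⟩ = x := Fin.ext (by simp [siteB]; omega)
    refine ⟨σ.symm ⟨x.val / 2, hx2⟩, ?_, by rw [Equiv.apply_symm_apply, hsx]⟩
    rw [hiff (σ.symm ⟨x.val / 2, hx2⟩), Equiv.apply_symm_apply, hsx]
    exact hxE
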